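/- Let d ≥ 2 and let ρ = Σ_{k,l=1}^d β_k conj(β_l)|k⟩⟨l| be a rank-one density operator on ℂ^d with Σ|β_i|² = 1. With the Kraus operators E_j = (1/√(d+1))|j⟩⟨j| (j = 1,…,d) and E_n = (1/√(4^{d-1}(d+1)))|ψ(n)⟩⟨ψ(n)|σ_z(n) for n ∈ {0}×{0,1,2,3}^{d-1} as defined via |ψ(n)⟩ = Σ_j i^{n_j}|j⟩ and σ_z(n) = Σ_j (-1)^{n_j}|j⟩⟨j|, the operator Σ_i E_i ρ E_i† has matrix entries: diagonal entry (p,p) equal to (1 + |β_p|²)/(d+1), and off-diagonal entry (p,q) for p ≠ q equal to β_q·conj(β_p)/(d+1). -/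

import Mathlib

open Complex Matrix

/-- `|ψ(n)⟩⟨ψ(n)|` where `|ψ(n)⟩ = Σ_j i^{n_j}|j⟩`. -/
noncomputable def psiProj (d : ℕ) (n : Fin d → Fin 4) : Matrix (Fin d) (Fin d) ℂ :=
  Matrix.of fun p q => Complex.I ^ (n p : ℕ) * (-Complex.I) ^ (n q : ℕ)

/-- `σ_z(n) = Σ_j (-1)^{n_j}|j⟩⟨j|`. -/
noncomputable def sigmaZ (d : ℕ) (n : Fin d → Fin 4) : Matrix (Fin d) (Fin d) ℂ :=
  Matrix.diagonal fun j => (-1 : ℂ) ^ (n j : ℕ)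

/-- The rank-one Kraus operator `E_n = (1/√(4^{d-1}(d+1)))|ψ(n)⟩⟨ψ(n)|σ_z(n)`. -/
noncomputable def krausPsi (d : ℕ) (n : Fin d → Fin 4) : Matrix (Fin d) (Fin d) ℂ :=
  ((1 : ℂ) / (Real.sqrt (4 ^ (d - 1) * (d + 1)) : ℝ)) • (psiProj d n * sigmaZ d n)

/-- The rank-one Kraus operator `E_j = (1/√(d+1))|j⟩⟨j|`. -/
noncomputable def krausDiag (d : ℕ) (j : Fin d) : Matrix (Fin d) (Fin d) ℂ :=
  ((1 : ℂ) / (Real.sqrt (d + 1) : ℝ)) • Matrix.single j j (1 : ℂ)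

/-! ### Auxiliary lemmas -/

lemma aux_sum_pow_root (a b : ℕ) (ha : a ≤ 2) (hb : b ≤ 2) :
    ∑ m : Fin 4, (Complex.I ^ a * (-Complex.I) ^ b) ^ (m : ℕ)
      = if a = b then 4 else 0 := by
  have h0 : ((0:Fin 4):ℕ) = 0 := rfl
  have h1 : ((1:Fin 4):ℕ) = 1 := rfl
  have h2 : ((2:Fin 4):ℕ) = 2 := rfl
  have h3 : ((3:Fin 4):ℕ) = 3 := rfl
  interval_cases a <;> interval_cases b <;>
    norm_num [Fin.sum_univ_four, h0, h1, h2, h3, pow_succ, Complex.ext_iff]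

lemma aux_filter_sum_prod {d : ℕ} (j0 : Fin d) (z : Fin d → ℂ) :
    ∑ n ∈ Finset.univ.filter (fun n : Fin d → Fin 4 => n j0 = 0),
      ∏ j, z j ^ ((n j : ℕ)) = ∏ j ∈ Finset.univ.erase j0, (∑ m : Fin 4, z j ^ (m:ℕ)) := by
  classical
  have hset : Finset.univ.filter (fun n : Fin d → Fin 4 => n j0 = 0)
      = Fintype.piFinset (fun j => if j = j0 then ({0} : Finset (Fin 4)) else Finset.univ) := by
    ext n
    simp only [Finset.mem_filter, Finset.mem_univ, true_and, Fintype.mem_piFinset]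
    constructor
    · intro h j; by_cases hj : j = j0 <;> simp [hj, h]
    · intro h; have := h j0; simpa using this
  rw [hset, ← Finset.prod_univ_sum (fun j => if j = j0 then ({0} : Finset (Fin 4)) else Finset.univ)
      (fun j m => z j ^ (m : ℕ))]
  rw [← Finset.prod_erase_mul _ _ (Finset.mem_univ j0)]
  rw [if_pos rfl]
  simp only [Finset.sum_singleton, Fin.val_zero, pow_zero, mul_one]
  exact Finset.prod_congr rfl (fun j hj => by rw [if_neg (Finset.mem_erase.mp hj).1])

lemma aux_prod_if_zero {α : Type*} (s : Finset α) (P : α → Prop) [DecidablePred P] (c : ℂ) :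
    ∏ j ∈ s, (if P j then c else 0) = if ∀ j ∈ s, P j then c ^ s.card else 0 := by
  by_cases h : ∀ j ∈ s, P j
  · rw [if_pos h, Finset.prod_congr rfl (fun j hj => if_pos (h j hj)), Finset.prod_const]
  · push_neg at h
    obtain ⟨j, hj, hP⟩ := h
    rw [Finset.prod_eq_zero hj (if_neg hP : (if P j then c else 0) = 0),
      if_neg (by push_neg; exact ⟨j, hj, hP⟩)]

lemma aux_ind_eq {d : ℕ} {j0 x y : Fin d}
    (h : ∀ j, j ≠ j0 → ((if j = x then (1:ℕ) else 0) = if j = y then 1 else 0)) : x = y := by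
  by_contra hxy
  by_cases hx : x = j0
  · have hy : y ≠ j0 := fun h' => hxy (hx.trans h'.symm)
    have := h y hy
    rw [if_neg (fun h' => hxy h'.symm), if_pos rfl] at this
    omega
  · have := h x hx
    simp [hxy] at this

lemma aux_cond_eq {d : ℕ} {j0 p k l : Fin d}
    (h : ∀ j, j ≠ j0 → ((if j = p then (1:ℕ) else 0) + (if j = k then 1 else 0)
        = (if j = p then 1 else 0) + (if j = l then 1 else 0))) : k = l :=
  aux_ind_eq (j0 := j0) (fun j hj => Nat.add_left_cancel (h j hj))

lemma aux_cond_ne {d : ℕ} {j0 p q k l : Fin d} (hpq : p ≠ q)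
    (h : ∀ j, j ≠ j0 → ((if j = p then (1:ℕ) else 0) + (if j = k then 1 else 0)
        = (if j = q then 1 else 0) + (if j = l then 1 else 0))) : k = q ∧ l = p := by
  by_cases hq0 : q = j0
  · subst hq0
    have hk : k = q := by
      by_contra hk
      have h1 := h k hk
      simp [hk] at h1
      have hkl : k = l := by by_contra h2; simp [h2] at h1
      have hkp : k ≠ p := by intro h2; rw [if_pos h2, ← hkl, if_pos rfl] at h1; omega
      have h2 := h p hpq
      rw [if_pos rfl, if_neg hpq, if_neg (Ne.symm hkp), ← hkl, if_neg (Ne.symm hkp)] at h2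
      omega
    subst hk
    refine ⟨rfl, (aux_ind_eq (j0 := k) fun j hj => ?_).symm⟩
    have h1 := h j hj
    simp [hj] at h1
    exact h1
  · have hk : k = q := by
      by_contra hk
      have h1 := h q hq0
      rw [if_neg (Ne.symm hpq), if_neg (Ne.symm hk), if_pos rfl] at h1
      omega
    subst hk
    refine ⟨rfl, (aux_ind_eq (j0 := j0) fun j hj => ?_).symm⟩
    have h1 := h j hj
    omega

lemma aux_hM (d : ℕ) (n : Fin d → Fin 4) (p k : Fin d) :
    (psiProj d n * sigmaZ d n) p k = Complex.I ^ (n p : ℕ) * Complex.I ^ (n k : ℕ) := by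
  simp only [psiProj, sigmaZ, Matrix.mul_diagonal, Matrix.of_apply]
  rw [mul_assoc, ← mul_pow]
  norm_num

lemma aux_psi_entry (d : ℕ) (n : Fin d → Fin 4) (β : Fin d → ℂ) (p q : Fin d) :
    (krausPsi d n * (Matrix.of fun k l => β k * (starRingEnd ℂ) (β l)) * (krausPsi d n)ᴴ) p q
    = (((4 ^ (d - 1) * (d + 1) : ℝ)) : ℂ)⁻¹ *
        ∑ k, ∑ l, β k * (starRingEnd ℂ) (β l) *
          (Complex.I ^ ((n p : ℕ) + (n k : ℕ)) * (-Complex.I) ^ ((n q : ℕ) + (n l : ℕ))) := by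
  have hA : psiProj d n * sigmaZ d n
      = Matrix.of fun p k => Complex.I ^ (n p : ℕ) * Complex.I ^ (n k : ℕ) := by
    ext a b; rw [aux_hM]; rfl
  have key : krausPsi d n * (Matrix.of fun k l => β k * (starRingEnd ℂ) (β l)) * (krausPsi d n)ᴴ
      = ((((4 ^ (d - 1) * (d + 1) : ℝ)) : ℂ)⁻¹) •
        ((Matrix.of fun p k => Complex.I ^ (n p : ℕ) * Complex.I ^ (n k : ℕ)) *
          (Matrix.of fun k l => β k * (starRingEnd ℂ) (β l)) *
          (Matrix.of fun p k => Complex.I ^ (n p : ℕ) * Complex.I ^ (n k : ℕ))ᴴ) := by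
    rw [krausPsi, hA, Matrix.conjTranspose_smul, Matrix.smul_mul, Matrix.smul_mul,
      Matrix.mul_smul, smul_smul]
    congr 1
    rw [Complex.star_def, map_div₀, _root_.map_one, Complex.conj_ofReal, div_mul_div_comm,
      one_mul, ← Complex.ofReal_mul, Real.mul_self_sqrt (by positivity), one_div]
  rw [key, Matrix.smul_apply, smul_eq_mul]
  congr 1
  simp only [Matrix.mul_apply, Matrix.conjTranspose_apply, Matrix.of_apply, Complex.star_def,
    _root_.map_mul, map_pow, Complex.conj_I]
  simp only [Finset.sum_mul]
  rw [Finset.sum_comm]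
  refine Finset.sum_congr rfl fun k _ => Finset.sum_congr rfl fun l _ => ?_
  simp only [pow_add]
  ring

lemma aux_Zval (d : ℕ) (j0 p q k l : Fin d) :
    ∑ n ∈ Finset.univ.filter (fun n : Fin d → Fin 4 => n j0 = 0),
      Complex.I ^ ((n p : ℕ) + (n k : ℕ)) * (-Complex.I) ^ ((n q : ℕ) + (n l : ℕ))
    = if (∀ j ∈ Finset.univ.erase j0,
        ((if j = p then 1 else 0) + (if j = k then 1 else 0) : ℕ)
          = (if j = q then 1 else 0) + (if j = l then 1 else 0))
      then (4:ℂ) ^ (d-1) else 0 := by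
  have hsum : ∀ (x : Fin d) (n : Fin d → Fin 4),
      ∑ j, ((if j = x then 1 else 0) : ℕ) * (n j : ℕ) = (n x : ℕ) := by
    intro x n
    simp [ite_mul, Finset.sum_ite_eq']
  have hterm : ∀ n : Fin d → Fin 4,
      Complex.I ^ ((n p : ℕ) + (n k : ℕ)) * (-Complex.I) ^ ((n q : ℕ) + (n l : ℕ))
      = ∏ j, (Complex.I ^ (((if j = p then 1 else 0) + (if j = k then 1 else 0)) : ℕ)
          * (-Complex.I) ^ (((if j = q then 1 else 0) + (if j = l then 1 else 0)) : ℕ)) ^ (n j : ℕ) := by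
    intro n
    simp only [mul_pow, ← pow_mul]
    rw [Finset.prod_mul_distrib, Finset.prod_pow_eq_pow_sum, Finset.prod_pow_eq_pow_sum]
    congr 1 <;>
    · congr 1
      simp only [add_mul, Finset.sum_add_distrib, hsum]
  rw [Finset.sum_congr rfl (fun n _ => hterm n), aux_filter_sum_prod j0]
  rw [Finset.prod_congr rfl (fun j _ => aux_sum_pow_root _ _ (by split_ifs <;> norm_num)
    (by split_ifs <;> norm_num)), aux_prod_if_zero]
  have hcard : (Finset.univ.erase j0).card = d - 1 := by
    rw [Finset.card_erase_of_mem (Finset.mem_univ j0), Finset.card_univ, Fintype.card_fin]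
  rw [hcard]
  convert rfl using 3

lemma aux_diag_entry (d : ℕ) (j p q : Fin d) (A : Matrix (Fin d) (Fin d) ℂ) :
    (single j j (1:ℂ) * A * (single j j (1:ℂ))ᴴ) p q
      = if j = p ∧ j = q then A j j else 0 := by
  simp only [Matrix.mul_apply, Matrix.single, Matrix.conjTranspose_apply, Matrix.of_apply,
    apply_ite (star : ℂ → ℂ), star_one, star_zero, ite_mul, mul_ite, one_mul, mul_one, zero_mul,
    mul_zero]
  rw [Finset.sum_eq_single j (fun b _ hb => if_neg (fun h => hb h.2.symm)) (by simp),
    Finset.sum_eq_single j (fun b _ hb => if_neg (fun h => hb h.2.symm)) (by simp)]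
  by_cases h1 : j = p <;> by_cases h2 : j = q <;> simp [h1, h2]

lemma aux_diag_sum (d : ℕ) (β : Fin d → ℂ) (p q : Fin d) :
    (∑ j : Fin d,
        krausDiag d j * (Matrix.of fun k l => β k * (starRingEnd ℂ) (β l)) * (krausDiag d j)ᴴ) p q
    = if p = q then (((d : ℝ) + 1 : ℝ) : ℂ)⁻¹ * (β p * (starRingEnd ℂ) (β p)) else 0 := by
  have hc : ((1 : ℂ) / (Real.sqrt (d + 1) : ℝ)) * star ((1 : ℂ) / (Real.sqrt (d + 1) : ℝ))
      = (((d : ℝ) + 1 : ℝ) : ℂ)⁻¹ := by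
    rw [Complex.star_def, map_div₀, _root_.map_one, Complex.conj_ofReal, div_mul_div_comm,
      one_mul, ← Complex.ofReal_mul, Real.mul_self_sqrt (by positivity), one_div]
  rw [Matrix.sum_apply]
  have hterm : ∀ j : Fin d,
      (krausDiag d j * (Matrix.of fun k l => β k * (starRingEnd ℂ) (β l)) * (krausDiag d j)ᴴ) p q
      = if j = p ∧ j = q then (((d : ℝ) + 1 : ℝ) : ℂ)⁻¹ * (β j * (starRingEnd ℂ) (β j)) else 0 := by
    intro j
    simp only [krausDiag, Matrix.conjTranspose_smul, Matrix.smul_mul, Matrix.mul_smul,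
      smul_smul, Matrix.smul_apply, smul_eq_mul]
    rw [aux_diag_entry, Matrix.of_apply]
    split_ifs
    · rw [← hc]; ring
    · simp
  rw [Finset.sum_congr rfl (fun j _ => hterm j)]
  by_cases hpq : p = q
  · subst hpq
    rw [Finset.sum_eq_single p (fun b _ hb => if_neg (fun h => hb h.1)) (by simp), if_pos ⟨rfl, rfl⟩,
      if_pos rfl]
  · rw [if_neg hpq, Finset.sum_eq_zero]
    intro j _
    exact if_neg (fun h => hpq (h.1.symm.trans h.2))

/-- Action of the Kraus operators on a rank-one density operator
`ρ = Σ_{k,l} β_k conj(β_l)|k⟩⟨l|`: the output `Σ_i E_i ρ E_i†` has diagonal entries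
`(1+|β_p|²)/(d+1)` and off-diagonal `(p,q)` entries `β_q·conj(β_p)/(d+1)`. -/
theorem kraus_channel_action (d : ℕ) (hd : 2 ≤ d) (β : Fin d → ℂ)
    (hβ : ∑ i, ‖β i‖ ^ 2 = 1) (p q : Fin d) :
    ((∑ j : Fin d,
        krausDiag d j * (Matrix.of fun k l => β k * (starRingEnd ℂ) (β l)) * (krausDiag d j)ᴴ)
      + ∑ n ∈ Finset.univ.filter (fun n : Fin d → Fin 4 => n ⟨0, by omega⟩ = 0),
          krausPsi d n * (Matrix.of fun k l => β k * (starRingEnd ℂ) (β l)) * (krausPsi d n)ᴴ) p q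
      = if p = q then ((1 + ‖β p‖ ^ 2 : ℝ) : ℂ) / (d + 1)
        else β q * (starRingEnd ℂ) (β p) / (d + 1) := by
  classical
  set j0 : Fin d := ⟨0, by omega⟩ with hj0
  have h4 : ((4:ℂ) ^ (d-1)) ≠ 0 := pow_ne_zero _ (by norm_num)
  have hd1 : ((d:ℂ) + 1) ≠ 0 := Nat.cast_add_one_ne_zero d
  rw [Matrix.add_apply, aux_diag_sum, Matrix.sum_apply]
  rw [Finset.sum_congr rfl (fun n _ => aux_psi_entry d n β p q), ← Finset.mul_sum]
  rw [Finset.sum_comm]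
  rw [Finset.sum_congr rfl (fun k _ => Finset.sum_comm)]
  have hswap : ∀ k l : Fin d,
      ∑ n ∈ Finset.univ.filter (fun n : Fin d → Fin 4 => n j0 = 0),
        β k * (starRingEnd ℂ) (β l) *
          (Complex.I ^ ((n p : ℕ) + (n k : ℕ)) * (-Complex.I) ^ ((n q : ℕ) + (n l : ℕ)))
      = β k * (starRingEnd ℂ) (β l) *
          (if (∀ j ∈ Finset.univ.erase j0,
            ((if j = p then 1 else 0) + (if j = k then 1 else 0) : ℕ)
              = (if j = q then 1 else 0) + (if j = l then 1 else 0))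
            then (4:ℂ) ^ (d-1) else 0) := by
    intro k l
    rw [← Finset.mul_sum, aux_Zval d j0 p q k l]
  rw [Finset.sum_congr rfl (fun k _ => Finset.sum_congr rfl (fun l _ => hswap k l))]
  have hCast : (((4 ^ (d - 1) * (d + 1) : ℝ)) : ℂ)⁻¹ = ((4:ℂ)^(d-1) * ((d:ℂ)+1))⁻¹ := by
    push_cast; ring_nf
  by_cases hpq : p = q
  · subst hpq
    have hcond : ∀ k l : Fin d,
        (∀ j ∈ Finset.univ.erase j0,
          ((if j = p then 1 else 0) + (if j = k then 1 else 0) : ℕ)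
            = (if j = p then 1 else 0) + (if j = l then 1 else 0)) ↔ k = l := by
      intro k l
      constructor
      · intro h
        exact aux_cond_eq (j0 := j0) (p := p)
          (fun j hj => h j (Finset.mem_erase.mpr ⟨hj, Finset.mem_univ j⟩))
      · rintro rfl _ _; rfl
    have hrw : ∀ k : Fin d, ∑ l : Fin d, β k * (starRingEnd ℂ) (β l) *
        (if (∀ j ∈ Finset.univ.erase j0,
          ((if j = p then 1 else 0) + (if j = k then 1 else 0) : ℕ)
            = (if j = p then 1 else 0) + (if j = l then 1 else 0))
          then (4:ℂ) ^ (d-1) else 0)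
        = β k * (starRingEnd ℂ) (β k) * (4:ℂ) ^ (d-1) := by
      intro k
      rw [Finset.sum_congr rfl (fun l _ => by
        rw [if_congr (hcond k l) rfl rfl, mul_ite, mul_zero])]
      simp [Finset.sum_ite_eq, Finset.sum_ite_eq']
    rw [Finset.sum_congr rfl (fun k _ => hrw k)]
    have hβ' : ∑ k, β k * (starRingEnd ℂ) (β k) * (4:ℂ) ^ (d-1)
        = (4:ℂ) ^ (d-1) := by
      rw [← Finset.sum_mul]
      have : ∀ k, β k * (starRingEnd ℂ) (β k) = ((‖β k‖ ^ 2 : ℝ) : ℂ) := by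
        intro k
        rw [Complex.mul_conj, Complex.sq_norm]
      rw [Finset.sum_congr rfl (fun k _ => this k), ← Complex.ofReal_sum, hβ,
        Complex.ofReal_one, one_mul]
    rw [hβ', if_pos rfl, hCast]
    have : β p * (starRingEnd ℂ) (β p) = ((‖β p‖ ^ 2 : ℝ) : ℂ) := by
      rw [Complex.mul_conj, Complex.sq_norm]
    rw [this]
    push_cast
    simp only [↓reduceIte]
    field_simp
    ring
  · have hcond : ∀ k l : Fin d,
        (∀ j ∈ Finset.univ.erase j0,
          ((if j = p then 1 else 0) + (if j = k then 1 else 0) : ℕ)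
            = (if j = q then 1 else 0) + (if j = l then 1 else 0)) ↔ (k = q ∧ l = p) := by
      intro k l
      constructor
      · intro h
        exact aux_cond_ne (j0 := j0) hpq
          (fun j hj => h j (Finset.mem_erase.mpr ⟨hj, Finset.mem_univ j⟩))
      · rintro ⟨rfl, rfl⟩ j _
        ring
    have hrw : ∀ k : Fin d, ∑ l : Fin d, β k * (starRingEnd ℂ) (β l) *
        (if (∀ j ∈ Finset.univ.erase j0,
          ((if j = p then 1 else 0) + (if j = k then 1 else 0) : ℕ)
            = (if j = q then 1 else 0) + (if j = l then 1 else 0))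
          then (4:ℂ) ^ (d-1) else 0)
        = if k = q then β k * (starRingEnd ℂ) (β p) * (4:ℂ) ^ (d-1) else 0 := by
      intro k
      rw [Finset.sum_congr rfl (fun l _ => by
        rw [if_congr (hcond k l) rfl rfl, mul_ite, mul_zero])]
      by_cases hk : k = q <;> simp [hk, Finset.sum_ite_eq, Finset.sum_ite_eq']
    rw [Finset.sum_congr rfl (fun k _ => hrw k)]
    simp only [Finset.sum_ite_eq, Finset.sum_ite_eq', Finset.mem_univ, if_true, if_neg hpq]
    rw [hCast]
    field_simp
    ring
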